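/- For real numbers x, y, z, the real symmetric 3×3 matrix B = [[2, z, y], [z, 2, x], [y, x, 2]] is positive definite if and only if −2 ≤ x ≤ 2, −2 ≤ y ≤ 2, −2 ≤ z ≤ 2, and κ(x,y,z) < 2, where κ(x,y,z) = x² + y² + z² − x·y·z − 2. -/

import Mathlib

open Matrix

lemma quadform_eval (x y z : ℝ) (v : Fin 3 → ℝ) :
    star v ⬝ᵥ ((!![(2 : ℝ), z, y; z, 2, x; y, x, 2]) *ᵥ v) =
      2*(v 0)^2 + 2*(v 1)^2 + 2*(v 2)^2 + 2*z*(v 0)*(v 1) + 2*y*(v 0)*(v 2)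
        + 2*x*(v 1)*(v 2) := by
  simp [mulVec, dotProduct, Fin.sum_univ_three, Matrix.cons_val_zero, Matrix.cons_val_one]
  ring

theorem bilinear_form_posDef_iff
    (x y z : ℝ) :
    (!![(2 : ℝ), z, y; z, 2, x; y, x, 2]).PosDef ↔
      (-2 ≤ x ∧ x ≤ 2) ∧ (-2 ≤ y ∧ y ≤ 2) ∧ (-2 ≤ z ∧ z ≤ 2) ∧
        x ^ 2 + y ^ 2 + z ^ 2 - x * y * z - 2 < 2 := by
  constructor
  · intro hPD
    have hdet := hPD.det_pos
    rw [Matrix.det_fin_three] at hdet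
    norm_num [Matrix.cons_val_two] at hdet
    have hx1 := hPD.dotProduct_mulVec_pos (x := ![0,1,1]) (by intro h; simpa using congrFun h 1)
    have hx2 := hPD.dotProduct_mulVec_pos (x := ![0,1,-1]) (by intro h; simpa using congrFun h 1)
    have hy1 := hPD.dotProduct_mulVec_pos (x := ![1,0,1]) (by intro h; simpa using congrFun h 0)
    have hy2 := hPD.dotProduct_mulVec_pos (x := ![1,0,-1]) (by intro h; simpa using congrFun h 0)
    have hz1 := hPD.dotProduct_mulVec_pos (x := ![1,1,0]) (by intro h; simpa using congrFun h 0)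
    have hz2 := hPD.dotProduct_mulVec_pos (x := ![1,-1,0]) (by intro h; simpa using congrFun h 0)
    rw [quadform_eval] at hx1 hx2 hy1 hy2 hz1 hz2
    norm_num [Matrix.cons_val_two] at hx1 hx2 hy1 hy2 hz1 hz2
    refine ⟨⟨by nlinarith, by nlinarith⟩, ⟨by nlinarith, by nlinarith⟩,
      ⟨by nlinarith, by nlinarith⟩, by nlinarith⟩
  · rintro ⟨⟨hx1, hx2⟩, ⟨hy1, hy2⟩, ⟨hz1, hz2⟩, hk⟩
    have hz : z^2 < 4 := by nlinarith [sq_nonneg (x - y), sq_nonneg (x + y)]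
    refine posDef_iff_dotProduct_mulVec.mpr ⟨?_, ?_⟩
    · show _ᴴ = _
      ext i j; fin_cases i <;> fin_cases j <;> simp
    · intro v hv
      rw [quadform_eval]
      set a := v 0; set b := v 1; set c := v 2
      have key : (4 - z^2) * (2*a + z*b + y*c)^2 + ((4 - z^2)*b + (2*x - y*z)*c)^2
          + 4*(4 - (x^2 + y^2 + z^2 - x*y*z))*c^2
          = 2*(4 - z^2)*(2*a^2 + 2*b^2 + 2*c^2 + 2*z*a*b + 2*y*a*c + 2*x*b*c) := by ring
      have hf : 4 - (x^2 + y^2 + z^2 - x*y*z) > 0 := by nlinarith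
      by_cases hc : c = 0
      · by_cases hb : b = 0
        · have ha : a ≠ 0 := by
            intro ha
            apply hv; ext i; fin_cases i <;> simpa [a, b, c] using ‹_›
          rw [hb, hc]
          nlinarith [sq_pos_of_ne_zero ha]
        · rw [hc]
          nlinarith [sq_nonneg (2*a + z*b), sq_pos_of_ne_zero hb,
            mul_pos (sub_pos.mpr hz) (sq_pos_of_ne_zero hb), sub_pos.mpr hz]
      · nlinarith [sq_nonneg (2*a + z*b + y*c), sq_nonneg ((4 - z^2)*b + (2*x - y*z)*c),
          sq_pos_of_ne_zero hc, mul_pos hf (sq_pos_of_ne_zero hc)]
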